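/- If diag(Q) ≥ 0 (all diagonal entries nonnegative) and both SDP optima are attained, then the optimal value of DNN_{L1} (maximize Q̃ • Y s.t. eᵀYe = 1, Y ≥ 0, Y ⪰ 0) equals the optimal value of DNN_{L1}^{new} (maximize Q̃ • Y s.t. eᵀYe ≤ 1, Y_{i,n+i} = 0 for all i, Y ≥ 0, Y ⪰ 0). -/

import Mathlib

open Matrix

lemma psd_smul {m : Type*} [Fintype m] {M : Matrix m m ℝ} (h : M.PosSemidef) {c : ℝ}
    (hc : 0 ≤ c) : (c • M).PosSemidef := by
  rw [posSemidef_iff_dotProduct_mulVec]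
  constructor
  · unfold Matrix.IsHermitian
    rw [conjTranspose_smul, h.1]
    simp
  · intro x
    rw [smul_mulVec, dotProduct_smul]
    exact mul_nonneg hc (h.dotProduct_mulVec_nonneg x)

lemma corr_psd {n : ℕ} (d : Fin n → ℝ) (hd : ∀ k, 0 ≤ d k) :
    (fromBlocks (diagonal d) (-(diagonal d)) (-(diagonal d)) (diagonal d)).PosSemidef := by
  rw [posSemidef_iff_dotProduct_mulVec]
  constructor
  · unfold Matrix.IsHermitian
    rw [fromBlocks_conjTranspose]
    simp [diagonal_conjTranspose]
  · intro x
    have hx : x = Sum.elim (x ∘ Sum.inl) (x ∘ Sum.inr) := by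
      ext i; cases i <;> rfl
    rw [hx, fromBlocks_mulVec]
    have : ∀ y : (Fin n ⊕ Fin n) → ℝ, star y = y := fun y => rfl
    rw [this]
    simp only [dotProduct, Fintype.sum_sum_type, Sum.elim_inl, Sum.elim_inr, Pi.add_apply,
      mulVec_diagonal, neg_mulVec, Pi.neg_apply]
    simp only [Function.comp_apply, Sum.elim_comp_inl, Sum.elim_comp_inr]
    rw [← hx, ← Finset.sum_add_distrib]
    apply Finset.sum_nonneg
    intro k _
    have : x (Sum.inl k) * (d k * x (Sum.inl k) + -(d k * x (Sum.inr k))) +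
        x (Sum.inr k) * (-(d k * x (Sum.inl k)) + d k * x (Sum.inr k)) =
        d k * (x (Sum.inl k) - x (Sum.inr k))^2 := by ring
    rw [this]
    exact mul_nonneg (hd k) (sq_nonneg _)

lemma corr_sum {n : ℕ} (d : Fin n → ℝ) :
    ∑ i, ∑ j, fromBlocks (diagonal d) (-(diagonal d)) (-(diagonal d)) (diagonal d) i j = 0 := by
  simp [Fintype.sum_sum_type, diagonal_apply, Finset.sum_ite_eq]

lemma corr_trace {n : ℕ} (Q : Matrix (Fin n) (Fin n) ℝ) (d : Fin n → ℝ) :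
    Matrix.trace (fromBlocks Q (-Q) (-Q) Q *
      fromBlocks (diagonal d) (-(diagonal d)) (-(diagonal d)) (diagonal d)) =
      ∑ k, 4 * (Q k k * d k) := by
  rw [fromBlocks_multiply]
  simp only [Matrix.trace, Matrix.diag, Fintype.sum_sum_type, fromBlocks_apply₁₁,
    fromBlocks_apply₂₂, Matrix.add_apply, Matrix.neg_mul, Matrix.mul_neg, neg_neg,
    Matrix.mul_diagonal]
  rw [← Finset.sum_add_distrib]
  exact Finset.sum_congr rfl (fun k _ => by ring)

lemma trace_mul_diag_single {m : Type*} [Fintype m] [DecidableEq m]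
    (M : Matrix m m ℝ) (a : m) :
    Matrix.trace (M * diagonal (Pi.single a 1)) = M a a := by
  simp [Matrix.trace, Matrix.diag, Matrix.mul_diagonal, Pi.single_apply,
    Finset.sum_ite_eq', mul_ite]

theorem stmt_9 (n : ℕ) (Q : Matrix (Fin n) (Fin n) ℝ) (hQsym : Q.IsSymm)
    (hdiag : ∀ i, 0 ≤ Q i i)
    (Qt : Matrix (Fin n ⊕ Fin n) (Fin n ⊕ Fin n) ℝ)
    (hQt : Qt = Matrix.fromBlocks Q (-Q) (-Q) Q)
    (v₁ v₂ : ℝ)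
    (h₁ : IsGreatest {v : ℝ | ∃ Y : Matrix (Fin n ⊕ Fin n) (Fin n ⊕ Fin n) ℝ,
        (∑ i, ∑ j, Y i j) = 1 ∧
        (∀ i j, 0 ≤ Y i j) ∧ Y.PosSemidef ∧
        v = Matrix.trace (Qt * Y)} v₁)
    (h₂ : IsGreatest {v : ℝ | ∃ Y : Matrix (Fin n ⊕ Fin n) (Fin n ⊕ Fin n) ℝ,
        (∑ i, ∑ j, Y i j) ≤ 1 ∧
        (∀ i : Fin n, Y (Sum.inl i) (Sum.inr i) = 0) ∧
        (∀ i j, 0 ≤ Y i j) ∧ Y.PosSemidef ∧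
        v = Matrix.trace (Qt * Y)} v₂) :
    v₁ = v₂ := by
  obtain ⟨⟨Y, hYsum, hYnn, hYpsd, hYval⟩, hub₁⟩ := h₁
  obtain ⟨⟨Z, hZsum, hZdiag, hZnn, hZpsd, hZval⟩, hub₂⟩ := h₂
  -- n is positive
  have hn : 0 < n := by
    rcases Nat.eq_zero_or_pos n with h | h
    · exfalso
      subst h
      simp at hYsum
    · exact h
  -- 0 ≤ v₂ (take Y = 0)
  have hv₂0 : (0 : ℝ) ≤ v₂ := by
    refine hub₂ ⟨0, by simp, by simp, by simp, Matrix.PosSemidef.zero, by simp⟩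
  -- 0 ≤ v₁ (take E = diagonal single)
  have hv₁0 : (0 : ℝ) ≤ v₁ := by
    set a : Fin n ⊕ Fin n := Sum.inl (⟨0, hn⟩ : Fin n) with ha
    have hd1 : (0 : (Fin n ⊕ Fin n) → ℝ) ≤ Pi.single a 1 := by
      intro i
      rcases eq_or_ne i a with h | h
      · subst h; simp
      · simp [Pi.single_apply, h]
    have hmem : Matrix.trace (Qt * diagonal (Pi.single a 1)) ≤ v₁ := by
      refine hub₁ ⟨diagonal (Pi.single a 1), ?_, ?_, Matrix.PosSemidef.diagonal hd1, rfl⟩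
      · simp [diagonal_apply, Finset.sum_ite_eq, Pi.single_apply]
      · intro i j
        rcases eq_or_ne i j with h | h
        · subst h; simpa using hd1 i
        · simp [diagonal_apply, h]
    have heq : Matrix.trace (Qt * diagonal (Pi.single a 1)) = Q ⟨0, hn⟩ ⟨0, hn⟩ := by
      rw [trace_mul_diag_single, hQt, ha, fromBlocks_apply₁₁]
    rw [heq] at hmem
    exact le_trans (hdiag _) hmem
  -- symmetry of Y
  have hYsym : ∀ i j, Y j i = Y i j := by
    intro i j
    have := congrFun (congrFun hYpsd.1 i) j
    simpa [Matrix.conjTranspose_apply] using this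
  apply le_antisymm
  · -- v₁ ≤ v₂ via correction
    set d : Fin n → ℝ := fun k => Y (Sum.inl k) (Sum.inr k) with hdd
    have hd : ∀ k, 0 ≤ d k := fun k => hYnn _ _
    set C : Matrix (Fin n ⊕ Fin n) (Fin n ⊕ Fin n) ℝ :=
      fromBlocks (diagonal d) (-(diagonal d)) (-(diagonal d)) (diagonal d) with hC
    have hmem : Matrix.trace (Qt * (Y + C)) ≤ v₂ := by
      refine hub₂ ⟨Y + C, ?_, ?_, ?_, hYpsd.add (corr_psd d hd), rfl⟩
      · have : ∑ i, ∑ j, (Y + C) i j = (∑ i, ∑ j, Y i j) + ∑ i, ∑ j, C i j := by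
          simp [Matrix.add_apply, Finset.sum_add_distrib]
        rw [this, hYsum, hC, corr_sum]
        norm_num
      · intro i
        simp [hC, Matrix.add_apply, fromBlocks_apply₁₂, diagonal_apply, hdd]
      · intro i j
        cases i with
        | inl i =>
          cases j with
          | inl j =>
            rcases eq_or_ne i j with h | h
            · subst h
              simpa [hC, Matrix.add_apply, fromBlocks_apply₁₁, diagonal_apply] using
                add_nonneg (hYnn _ _) (hd i)
            · simpa [hC, Matrix.add_apply, fromBlocks_apply₁₁, diagonal_apply, h] using
                hYnn (Sum.inl i) (Sum.inl j)
          | inr j =>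
            rcases eq_or_ne i j with h | h
            · subst h
              simp [hC, Matrix.add_apply, fromBlocks_apply₁₂, diagonal_apply, hdd]
            · simpa [hC, Matrix.add_apply, fromBlocks_apply₁₂, diagonal_apply, h] using
                hYnn (Sum.inl i) (Sum.inr j)
        | inr i =>
          cases j with
          | inl j =>
            rcases eq_or_ne i j with h | h
            · subst h
              simp [hC, Matrix.add_apply, fromBlocks_apply₂₁, diagonal_apply, hdd,
                hYsym (Sum.inl i) (Sum.inr i)]
            · simpa [hC, Matrix.add_apply, fromBlocks_apply₂₁, diagonal_apply, h] using
                hYnn (Sum.inr i) (Sum.inl j)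
          | inr j =>
            rcases eq_or_ne i j with h | h
            · subst h
              simpa [hC, Matrix.add_apply, fromBlocks_apply₂₂, diagonal_apply] using
                add_nonneg (hYnn (Sum.inr i) (Sum.inr i)) (hd i)
            · simpa [hC, Matrix.add_apply, fromBlocks_apply₂₂, diagonal_apply, h] using
                hYnn (Sum.inr i) (Sum.inr j)
    have hexp : Matrix.trace (Qt * (Y + C)) =
        Matrix.trace (Qt * Y) + ∑ k, 4 * (Q k k * d k) := by
      rw [Matrix.mul_add, Matrix.trace_add, hC, hQt, corr_trace]
    have hnn : 0 ≤ ∑ k, 4 * (Q k k * d k) :=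
      Finset.sum_nonneg fun k _ => mul_nonneg (by norm_num) (mul_nonneg (hdiag k) (hd k))
    calc v₁ = Matrix.trace (Qt * Y) := hYval
      _ ≤ Matrix.trace (Qt * Y) + ∑ k, 4 * (Q k k * d k) := le_add_of_nonneg_right hnn
      _ = Matrix.trace (Qt * (Y + C)) := hexp.symm
      _ ≤ v₂ := hmem
  · -- v₂ ≤ v₁ via scaling
    set s : ℝ := ∑ i, ∑ j, Z i j with hs
    have hs0 : 0 ≤ s :=
      Finset.sum_nonneg fun i _ => Finset.sum_nonneg fun j _ => hZnn i j
    rcases eq_or_lt_of_le hs0 with h0 | hpos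
    · -- s = 0, so Z = 0 and v₂ = 0
      have hZ0 : Z = 0 := by
        ext i j
        have hrow : ∀ i ∈ Finset.univ, (0:ℝ) ≤ ∑ j, Z i j :=
          fun i _ => Finset.sum_nonneg fun j _ => hZnn i j
        have h1 : ∑ j, Z i j = 0 :=
          (Finset.sum_eq_zero_iff_of_nonneg hrow).mp h0.symm i (Finset.mem_univ i)
        have h2 : Z i j = 0 :=
          (Finset.sum_eq_zero_iff_of_nonneg (fun j _ => hZnn i j)).mp h1 j (Finset.mem_univ j)
        simpa using h2
      have : v₂ = 0 := by rw [hZval, hZ0]; simp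
      rw [this]; exact hv₁0
    · -- 0 < s: scale
      have hsne : s ≠ 0 := ne_of_gt hpos
      have hmem : Matrix.trace (Qt * (s⁻¹ • Z)) ≤ v₁ := by
        refine hub₁ ⟨s⁻¹ • Z, ?_, ?_, psd_smul hZpsd (by positivity), rfl⟩
        · simp only [Matrix.smul_apply, smul_eq_mul, ← Finset.mul_sum]
          rw [← hs, inv_mul_cancel₀ hsne]
        · intro i j
          exact mul_nonneg (by positivity) (hZnn i j)
      have hval : Matrix.trace (Qt * (s⁻¹ • Z)) = s⁻¹ * v₂ := by
        rw [Matrix.mul_smul, Matrix.trace_smul, hZval]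
        simp
      rw [hval] at hmem
      calc v₂ = s * (s⁻¹ * v₂) := by field_simp
        _ ≤ 1 * (s⁻¹ * v₂) :=
            mul_le_mul_of_nonneg_right hZsum (mul_nonneg (by positivity) hv₂0)
        _ = s⁻¹ * v₂ := one_mul _
        _ ≤ v₁ := hmem
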